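/- Let a : ℕ → ℝ with a n ≥ 0 for all n, let z be a nonzero complex number, and assume the family n ↦ a n · |z|^n is summable (so the family n ↦ a n · z^n is absolutely summable). Then ‖∑'_n a n · z^n‖ = ∑'_n a n · |z|^n if and only if for all m ≤ n with a m ≠ 0 and a n ≠ 0 one has z^(n−m) = (|z| : ℂ)^(n−m). In particular, if the support of a is contained in an arithmetic progression r + dℕ and d equals the greatest common divisor of the differences of elements of the support, the equality holds if and only if z^d = |z|^d. -/

import Mathlib

lemma key15 (a : ℕ → ℝ) (ha : ∀ n, 0 ≤ a n) (z : ℂ) (hz : z ≠ 0)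
    (hsum : Summable fun n : ℕ => a n * ‖z‖ ^ n) :
    (‖∑' n : ℕ, (a n : ℂ) * z ^ n‖ = ∑' n : ℕ, a n * ‖z‖ ^ n) ↔
      (∀ m n : ℕ, m ≤ n → a m ≠ 0 → a n ≠ 0 →
        z ^ (n - m) = ((‖z‖ : ℂ)) ^ (n - m)) := by
  have habs : (0:ℝ) < ‖z‖ := norm_pos_iff.mpr hz
  have habs' : (‖z‖ : ℂ) ≠ 0 := by
    exact_mod_cast ne_of_gt habs
  set f : ℕ → ℂ := fun n => (a n : ℂ) * z ^ n with hf
  have hfn : ∀ n, ‖f n‖ = a n * ‖z‖ ^ n := by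
    intro n
    simp [hf, map_mul, map_pow, Complex.norm_real,
      abs_of_nonneg (ha n)]
  have hS : Summable f := by
    apply Summable.of_norm
    simpa only [hfn] using hsum
  have htnn : (0:ℝ) ≤ ∑' n, a n * ‖z‖ ^ n :=
    tsum_nonneg fun n => mul_nonneg (ha n) (pow_nonneg habs.le n)
  constructor
  · intro heq m n hmn hm hn
    set S := ∑' n, f n with hSdef
    by_cases hS0 : S = 0
    · exfalso
      have h0 : ∑' n, a n * ‖z‖ ^ n = 0 := by
        rw [← heq]; simp [← hSdef, hS0]
      have := Summable.le_tsum hsum m (fun i _ => mul_nonneg (ha i) (pow_nonneg habs.le i))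
      rw [h0] at this
      have hm0 : a m * ‖z‖ ^ m = 0 :=
        le_antisymm this (mul_nonneg (ha m) (pow_nonneg habs.le m))
      exact hm (by
        rcases mul_eq_zero.1 hm0 with h | h
        · exact h
        · exact absurd h (pow_ne_zero m (ne_of_gt habs)))
    -- equality case of triangle inequality
    have hu : Summable fun n => (starRingEnd ℂ) S * f n := hS.mul_left _
    have hre : Summable fun n => ((starRingEnd ℂ) S * f n).re :=
      (Complex.hasSum_iff _ _ |>.1 hu.hasSum).1.summable
    have hg : Summable fun n => ‖S‖ * ‖f n‖ := by
      apply Summable.mul_left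
      simpa only [hfn] using hsum
    have hdiff : Summable fun n => ‖S‖ * ‖f n‖ - ((starRingEnd ℂ) S * f n).re :=
      hg.sub hre
    have hterm_le : ∀ n, ((starRingEnd ℂ) S * f n).re ≤ ‖S‖ * ‖f n‖ := by
      intro n
      calc ((starRingEnd ℂ) S * f n).re ≤ ‖(starRingEnd ℂ) S * f n‖ := Complex.re_le_norm _
        _ = ‖S‖ * ‖f n‖ := by simp
    have hsum_re : ∑' n, ((starRingEnd ℂ) S * f n).re = ‖S‖ * ‖S‖ := by
      rw [← Complex.re_tsum hu, tsum_mul_left, ← hSdef]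
      have h : (starRingEnd ℂ) S * S = ((‖S‖ * ‖S‖ : ℝ) : ℂ) := by
        rw [← Complex.normSq_eq_conj_mul_self]
        rw [Complex.normSq_eq_norm_sq]
        push_cast
        rw [sq]
      rw [h, Complex.ofReal_re]
    have hsum_g : ∑' n, ‖S‖ * ‖f n‖ = ‖S‖ * ‖S‖ := by
      rw [tsum_mul_left]
      congr 1
      rw [tsum_congr hfn]
      exact heq.symm
    have hdiff0 : ∑' n, (‖S‖ * ‖f n‖ - ((starRingEnd ℂ) S * f n).re) = 0 := by
      rw [Summable.tsum_sub hg hre, hsum_re, hsum_g, sub_self]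
    have hteq : ∀ k, ((starRingEnd ℂ) S * f k).re = ‖S‖ * ‖f k‖ := by
      intro k
      have hle := Summable.le_tsum hdiff k (fun i _ => sub_nonneg.2 (hterm_le i))
      rw [hdiff0] at hle
      have := sub_nonneg.2 (hterm_le k)
      linarith
    -- each conj S * f k is a nonneg real
    have hreal : ∀ k, (starRingEnd ℂ) S * f k = ((‖S‖ * ‖f k‖ : ℝ) : ℂ) := by
      intro k
      set u := (starRingEnd ℂ) S * f k with hu'
      have hnu : ‖u‖ = ‖S‖ * ‖f k‖ := by simp [hu']
      have hru : u.re = ‖u‖ := by rw [hnu]; exact hteq k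
      have h1 : u.re ^ 2 + u.im ^ 2 = ‖u‖ ^ 2 := by
        rw [Complex.sq_norm, Complex.normSq_apply]; ring
      rw [hru] at h1
      have h2 : u.im ^ 2 = 0 := le_antisymm (by linarith) (sq_nonneg _)
      have him : u.im = 0 := by
        exact pow_eq_zero_iff (two_ne_zero) |>.1 h2
      rw [← hnu]
      apply Complex.ext <;> simp [hru, him]
    have hcs : (starRingEnd ℂ) S ≠ 0 := by simpa using hS0
    have hzm : ∀ k, a k ≠ 0 → (starRingEnd ℂ) S * z ^ k = ((‖z‖ : ℂ) ^ k) * (‖S‖ : ℂ) := by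
      intro k hk
      have h : (starRingEnd ℂ) S * ((a k : ℂ) * z ^ k) = ((‖S‖ * (a k * ‖z‖ ^ k) : ℝ) : ℂ) := by
        have h' := hreal k
        rwa [hfn k] at h'
      have hak : (a k : ℂ) ≠ 0 := by exact_mod_cast hk
      apply mul_left_cancel₀ hak
      push_cast at h ⊢
      linear_combination h
    have h1 := hzm m hm
    have h2 := hzm n hn
    have hpow1 : z ^ (n-m) * z ^ m = z ^ n := by rw [← pow_add, Nat.sub_add_cancel hmn]
    have hpow2 : (‖z‖:ℂ) ^ (n-m) * (‖z‖:ℂ) ^ m = (‖z‖:ℂ) ^ n := by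
      rw [← pow_add, Nat.sub_add_cancel hmn]
    have key : z ^ (n - m) * ((starRingEnd ℂ) S * z ^ m)
        = (‖z‖:ℂ) ^ (n-m) * ((starRingEnd ℂ) S * z ^ m) := by
      calc z ^ (n-m) * ((starRingEnd ℂ) S * z ^ m)
          = (starRingEnd ℂ) S * (z^(n-m) * z^m) := by ring
        _ = (starRingEnd ℂ) S * z ^ n := by rw [hpow1]
        _ = (‖z‖:ℂ)^n * (‖S‖ : ℂ) := h2
        _ = (‖z‖:ℂ)^(n-m) * ((‖z‖:ℂ)^m * (‖S‖ : ℂ)) := by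
            rw [← mul_assoc, hpow2]
        _ = (‖z‖:ℂ)^(n-m) * ((starRingEnd ℂ) S * z ^ m) := by rw [h1]
    exact mul_right_cancel₀ (mul_ne_zero hcs (pow_ne_zero m hz)) key
  · intro hcond
    by_cases hall : ∀ n, a n = 0
    · have h1 : ∑' n, f n = 0 := by simp [hf, hall]
      have h2 : ∑' n, a n * ‖z‖ ^ n = 0 := by simp [hall]
      calc ‖∑' n, f n‖ = 0 := by rw [h1]; simp
        _ = ∑' n, a n * ‖z‖ ^ n := h2.symm
    · push_neg at hall
      have hex : ∃ n, a n ≠ 0 := hall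
      set m0 := Nat.find hex with hm0
      have hm0ne : a m0 ≠ 0 := Nat.find_spec hex
      set c : ℂ := z ^ m0 / (‖z‖ : ℂ) ^ m0 with hc
      have hcnorm : ‖c‖ = 1 := by
        rw [hc, norm_div]
        simp only [norm_pow, Complex.norm_real, norm_norm]
        field_simp
      have hfc : ∀ n, f n = ((a n * ‖z‖ ^ n : ℝ) : ℂ) * c := by
        intro n
        by_cases hn : a n = 0
        · simp [hf, hn]
        · have hmn : m0 ≤ n := Nat.find_min' hex hn
          have hz1 : z ^ (n - m0) = (‖z‖ : ℂ) ^ (n - m0) := hcond m0 n hmn hm0ne hn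
          have hzn : z ^ n = (‖z‖ : ℂ) ^ (n - m0) * z ^ m0 := by
            rw [← hz1, ← pow_add, Nat.sub_add_cancel hmn]
          have hpow : (‖z‖:ℂ)^(n-m0) * (‖z‖:ℂ)^m0 = (‖z‖:ℂ)^n := by
            rw [← pow_add, Nat.sub_add_cancel hmn]
          rw [hf]
          simp only
          rw [hzn, hc]
          push_cast
          rw [div_eq_mul_inv]
          field_simp
          linear_combination (a n : ℂ) * hpow
      have hts : ∑' n, f n = ((∑' n, a n * ‖z‖ ^ n : ℝ) : ℂ) * c := by
        rw [tsum_congr hfc, tsum_mul_right, Complex.ofReal_tsum]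
      calc ‖∑' n, f n‖ = ‖((∑' n, a n * ‖z‖ ^ n : ℝ) : ℂ) * c‖ := by rw [hts]
        _ = ∑' n, a n * ‖z‖ ^ n := by
            rw [norm_mul, hcnorm, mul_one, Complex.norm_real, Real.norm_eq_abs,
              abs_of_nonneg htnn]

theorem stmt15 (a : ℕ → ℝ) (ha : ∀ n, 0 ≤ a n) (z : ℂ) (hz : z ≠ 0)
    (hsum : Summable fun n : ℕ => a n * ‖z‖ ^ n) :
    ((‖∑' n : ℕ, (a n : ℂ) * z ^ n‖ = ∑' n : ℕ, a n * ‖z‖ ^ n) ↔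
      (∀ m n : ℕ, m ≤ n → a m ≠ 0 → a n ≠ 0 →
        z ^ (n - m) = ((‖z‖ : ℂ)) ^ (n - m))) ∧
    (∀ r d : ℕ,
      (∀ n : ℕ, a n ≠ 0 → ∃ q : ℕ, n = r + d * q) →
      (∀ m n : ℕ, m ≤ n → a m ≠ 0 → a n ≠ 0 → d ∣ n - m) →
      (∀ e : ℕ, (∀ m n : ℕ, m ≤ n → a m ≠ 0 → a n ≠ 0 → e ∣ n - m) → e ∣ d) →
      ((‖∑' n : ℕ, (a n : ℂ) * z ^ n‖ = ∑' n : ℕ, a n * ‖z‖ ^ n) ↔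
        z ^ d = ((‖z‖ : ℂ)) ^ d)) := by
  have habs : (0:ℝ) < ‖z‖ := norm_pos_iff.mpr hz
  have habs' : (‖z‖ : ℂ) ≠ 0 := by exact_mod_cast habs.ne'
  have hkey := key15 a ha z hz hsum
  refine ⟨hkey, fun r d hsupp hdvd hgcd => ?_⟩
  set w : ℂ := z / (‖z‖ : ℂ) with hw
  have hwne : w ≠ 0 := div_ne_zero hz habs'
  have hiff : ∀ k : ℕ, (z ^ k = (‖z‖ : ℂ) ^ k ↔ w ^ k = 1) := by
    intro k
    rw [hw, div_pow, div_eq_one_iff_eq (pow_ne_zero k habs')]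
  rw [hkey]
  constructor
  · intro hcond
    have horder : ∀ m n : ℕ, m ≤ n → a m ≠ 0 → a n ≠ 0 → orderOf w ∣ n - m := by
      intro m n hmn hm hn
      rw [orderOf_dvd_iff_pow_eq_one, ← hiff]
      exact hcond m n hmn hm hn
    have : orderOf w ∣ d := hgcd _ horder
    rw [hiff]
    exact orderOf_dvd_iff_pow_eq_one.1 this
  · intro hd m n hmn hm hn
    rw [hiff]
    obtain ⟨k, hk⟩ := hdvd m n hmn hm hn
    rw [hk, pow_mul, (hiff d).1 hd, one_pow]
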